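/- For positive integers z_2 ≥ 3, z_3 ≥ 2, z_4 ≥ 2, the partial sum S_4 = 1 + 1/z_2 + 1/(z_2^2 z_3) + 1/(z_2^4 z_3^2 z_4) equals the value of the finite continued fraction [1; z_2−1, 1, z_3−1, z_2, z_4−1, 1, z_2−1, z_3−1, 1, z_2−1]. -/

import Mathlib

/-- Value of a finite continued fraction `[a₀; a₁, …, aₙ]` given as a list. -/
noncomputable def cf : List ℝ → ℝ
  | [] => 0
  | a :: l => a + 1 / cf l

theorem stmt4 (z2 z3 z4 : ℕ) (h2 : 3 ≤ z2) (h3 : 2 ≤ z3) (h4 : 2 ≤ z4) :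
    1 + 1 / (z2 : ℝ) + 1 / ((z2 : ℝ) ^ 2 * z3) + 1 / ((z2 : ℝ) ^ 4 * (z3 : ℝ) ^ 2 * z4)
      = cf [1, (z2 : ℝ) - 1, 1, (z3 : ℝ) - 1, (z2 : ℝ), (z4 : ℝ) - 1, 1,
            (z2 : ℝ) - 1, (z3 : ℝ) - 1, 1, (z2 : ℝ) - 1] := by
  have ha : (3:ℝ) ≤ (z2:ℝ) := by exact_mod_cast h2
  have hb : (2:ℝ) ≤ (z3:ℝ) := by exact_mod_cast h3
  have hc : (2:ℝ) ≤ (z4:ℝ) := by exact_mod_cast h4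
  clear h2 h3 h4
  generalize (z2:ℝ) = a at *
  generalize (z3:ℝ) = b at *
  generalize (z4:ℝ) = c at *
  simp only [cf, div_zero, add_zero]
  have p1 : (0:ℝ) < a - 1 := by linarith
  have p2 : (0:ℝ) < a := by linarith
  have p3 : (0:ℝ) < a*b - 1 := by nlinarith
  have p4 : (0:ℝ) < a^2*b - a*b + 1 := by nlinarith
  have p5 : (0:ℝ) < a^2*b := by positivity
  have p6 : (0:ℝ) < a^2*b*c - a*b + 1 := by nlinarith
  have p7 : (0:ℝ) < a^3*b*c + a := by nlinarith
  have p8 : (0:ℝ) < a^3*b^2*c - a^3*b*c + a^2*b*c - a + 1 := by nlinarith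
  have p9 : (0:ℝ) < a^3*b^2*c + a^2*b*c + 1 := by nlinarith
  have p10 : (0:ℝ) < a^4*b^2*c := by positivity
  have s1 : 1 + 1/(a-1) = a/(a-1) := by field_simp; ring
  rw [s1]
  have s2 : (b-1) + 1/(a/(a-1)) = (a*b-1)/a := by
    rw [one_div_div]; field_simp; try ring
  rw [s2]
  have s3 : (a-1) + 1/((a*b-1)/a) = (a^2*b - a*b + 1)/(a*b-1) := by
    rw [one_div_div]; field_simp; try ring
  rw [s3]
  have s4 : 1 + 1/((a^2*b - a*b + 1)/(a*b-1)) = (a^2*b)/(a^2*b - a*b + 1) := by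
    rw [one_div_div]; field_simp; try ring
  rw [s4]
  have s5 : (c-1) + 1/((a^2*b)/(a^2*b - a*b + 1)) = (a^2*b*c - a*b + 1)/(a^2*b) := by
    rw [one_div_div]; field_simp; try ring
  rw [s5]
  have s6 : a + 1/((a^2*b*c - a*b + 1)/(a^2*b)) = (a^3*b*c + a)/(a^2*b*c - a*b + 1) := by
    rw [one_div_div, eq_div_iff p6.ne', add_mul, div_mul_cancel₀ _ p6.ne']; ring
  rw [s6]
  have s7 : (b-1) + 1/((a^3*b*c + a)/(a^2*b*c - a*b + 1))
      = (a^3*b^2*c - a^3*b*c + a^2*b*c - a + 1)/(a^3*b*c + a) := by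
    rw [one_div_div]; field_simp; try ring
  rw [s7]
  have s8 : 1 + 1/((a^3*b^2*c - a^3*b*c + a^2*b*c - a + 1)/(a^3*b*c + a))
      = (a^3*b^2*c + a^2*b*c + 1)/(a^3*b^2*c - a^3*b*c + a^2*b*c - a + 1) := by
    rw [one_div_div, eq_div_iff p8.ne', add_mul, div_mul_cancel₀ _ p8.ne']; ring
  rw [s8]
  have s9 : (a-1) + 1/((a^3*b^2*c + a^2*b*c + 1)/(a^3*b^2*c - a^3*b*c + a^2*b*c - a + 1))
      = (a^4*b^2*c)/(a^3*b^2*c + a^2*b*c + 1) := by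
    rw [one_div_div]; field_simp; try ring
  rw [s9, one_div_div]
  field_simp
  ring
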